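/- If Q_i, i = 1,...,n, lie on S^{k-1} and satisfy −𝐀²Q_i = Σ_{j≠i} m_j (Q_j − ⟨Q_i,Q_j⟩ Q_i)/(1 − ⟨Q_i,Q_j⟩²)^{3/2} − ‖𝐀Q_i‖² Q_i, then q_i(t) = T_k(At)Q_i is a solution of the curved n-body equations q̈_i = Σ_{j≠i} m_j (q_j − ⟨q_i,q_j⟩ q_i)/(1 − ⟨q_i,q_j⟩²)^{3/2} − ⟨q̇_i,q̇_i⟩ q_i. -/

import Mathlib

open scoped RealInnerProductSpace
open scoped Matrix

/-- The 2×2 rotation matrix `T(t)`. -/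
noncomputable def rot (t : ℝ) : Matrix (Fin 2) (Fin 2) ℝ :=
  !![Real.cos t, -Real.sin t; Real.sin t, Real.cos t]
/-- The block-diagonal matrix `T_k(At)` with 2×2 rotation blocks `T(A_l t)`, `k = 2p`. -/
noncomputable def blockRot (p : ℕ) (A : Fin p → ℝ) (t : ℝ) :
    Matrix (Fin (2 * p)) (Fin (2 * p)) ℝ := fun i j =>
  if (i : ℕ) / 2 = (j : ℕ) / 2 then
    rot (A ⟨(i : ℕ) / 2, by have := i.isLt; omega⟩ * t)
      ⟨(i : ℕ) % 2, by omega⟩ ⟨(j : ℕ) % 2, by omega⟩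
  else 0
/-- The diagonal matrix `𝐀 = diag(A₁,A₁,...,A_p,A_p)`. -/
noncomputable def bigA (p : ℕ) (A : Fin p → ℝ) : Matrix (Fin (2 * p)) (Fin (2 * p)) ℝ :=
  Matrix.diagonal fun i => A ⟨(i : ℕ) / 2, by have := i.isLt; omega⟩
/-- Application of a matrix to a vector of Euclidean space. -/
noncomputable def apM {k : ℕ} (M : Matrix (Fin k) (Fin k) ℝ) (x : EuclideanSpace ℝ (Fin k)) :
    EuclideanSpace ℝ (Fin k) := WithLp.toLp 2 (M.mulVec x)


noncomputable def blockRotG (p : ℕ) (θ : Fin p → ℝ) :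
    Matrix (Fin (2 * p)) (Fin (2 * p)) ℝ := fun i j =>
  if (i : ℕ) / 2 = (j : ℕ) / 2 then
    rot (θ ⟨(i : ℕ) / 2, by have := i.isLt; omega⟩)
      ⟨(i : ℕ) % 2, by omega⟩ ⟨(j : ℕ) % 2, by omega⟩
  else 0

lemma hasDerivAt_rot_entry (a b : Fin 2) (t : ℝ) :
    HasDerivAt (fun s => rot s a b) (rot (t + Real.pi / 2) a b) t := by
  fin_cases a <;> fin_cases b <;>
    simp [rot, Real.cos_add_pi_div_two, Real.sin_add_pi_div_two] <;>
    first
      | exact Real.hasDerivAt_cos t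
      | exact (Real.hasDerivAt_sin t).neg
      | exact Real.hasDerivAt_sin t

lemma rot_add_pi (u : ℝ) (a b : Fin 2) : rot (u + Real.pi) a b = -(rot u a b) := by
  fin_cases a <;> fin_cases b <;> simp [rot, Real.cos_add, Real.sin_add]

lemma blockRotG_apply_mk (p : ℕ) (θ : Fin p → ℝ) (l : ℕ) (hl : l < p) (r : ℕ) (hr : r < 2)
    (j : Fin (2 * p)) (hj : (j : ℕ) / 2 = l) :
    blockRotG p θ ⟨2 * l + r, by omega⟩ j =
      rot (θ ⟨l, hl⟩) ⟨r, hr⟩ ⟨(j : ℕ) % 2, by omega⟩ := by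
  simp only [blockRotG]
  rw [if_pos (show (2 * l + r) / 2 = (j : ℕ) / 2 by omega)]
  congr 1
  · congr 1
    simp only [Fin.mk.injEq]
    omega
  · simp only [Fin.mk.injEq]
    omega

lemma blockRotG_orth (p : ℕ) (θ : Fin p → ℝ) :
    (blockRotG p θ)ᵀ * blockRotG p θ = 1 := by
  ext i j
  rw [Matrix.mul_apply]
  simp only [Matrix.transpose_apply]
  by_cases h : (i : ℕ) / 2 = (j : ℕ) / 2
  · have hp : (i : ℕ) / 2 < p := by have := i.isLt; omega
    have h2l : 2 * ((i:ℕ)/2) + 0 < 2 * p := by omega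
    have h2l1 : 2 * ((i:ℕ)/2) + 1 < 2 * p := by omega
    have hne : (⟨2 * ((i:ℕ)/2) + 0, h2l⟩ : Fin (2*p)) ≠ ⟨2 * ((i:ℕ)/2) + 1, h2l1⟩ := by
      simp [Fin.ext_iff]
    have hzero : ∀ k : Fin (2*p),
        k ∉ ({⟨2 * ((i:ℕ)/2) + 0, h2l⟩, ⟨2 * ((i:ℕ)/2) + 1, h2l1⟩} : Finset (Fin (2*p))) →
        blockRotG p θ k i * blockRotG p θ k j = 0 := by
      intro k hk
      have hkk : (k:ℕ)/2 ≠ (i:ℕ)/2 := by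
        simp only [Finset.mem_insert, Finset.mem_singleton, Fin.ext_iff] at hk
        have := k.isLt
        omega
      rw [blockRotG, if_neg hkk, zero_mul]
    have hsum : (∑ k, blockRotG p θ k i * blockRotG p θ k j) =
        blockRotG p θ ⟨2 * ((i:ℕ)/2) + 0, h2l⟩ i * blockRotG p θ ⟨2 * ((i:ℕ)/2) + 0, h2l⟩ j +
        blockRotG p θ ⟨2 * ((i:ℕ)/2) + 1, h2l1⟩ i * blockRotG p θ ⟨2 * ((i:ℕ)/2) + 1, h2l1⟩ j := by
      rw [← Finset.sum_subset (Finset.subset_univ _) (fun k _ hk => hzero k hk),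
        Finset.sum_pair hne]
    rw [hsum,
      blockRotG_apply_mk p θ ((i:ℕ)/2) hp 0 (by omega) i rfl,
      blockRotG_apply_mk p θ ((i:ℕ)/2) hp 0 (by omega) j h.symm,
      blockRotG_apply_mk p θ ((i:ℕ)/2) hp 1 (by omega) i rfl,
      blockRotG_apply_mk p θ ((i:ℕ)/2) hp 1 (by omega) j h.symm]
    have hpyth := Real.sin_sq_add_cos_sq (θ ⟨(i:ℕ)/2, hp⟩)
    have hi2 : (i:ℕ) % 2 = 0 ∨ (i:ℕ) % 2 = 1 := by omega
    have hj2 : (j:ℕ) % 2 = 0 ∨ (j:ℕ) % 2 = 1 := by omega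
    rcases hi2 with hi2 | hi2 <;> rcases hj2 with hj2 | hj2
    · have hij : i = j := Fin.ext (by omega)
      rw [Matrix.one_apply, if_pos hij]
      simp only [hi2, hj2, Fin.mk_zero, Fin.mk_one]
      simp [rot]
      nlinarith [hpyth]
    · have hij : i ≠ j := fun hc => by rw [hc] at hi2; omega
      rw [Matrix.one_apply, if_neg hij]
      simp only [hi2, hj2, Fin.mk_zero, Fin.mk_one]
      simp [rot]
      ring
    · have hij : i ≠ j := fun hc => by rw [hc] at hi2; omega
      rw [Matrix.one_apply, if_neg hij]
      simp only [hi2, hj2, Fin.mk_zero, Fin.mk_one]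
      simp [rot]
      ring
    · have hij : i = j := Fin.ext (by omega)
      rw [Matrix.one_apply, if_pos hij]
      simp only [hi2, hj2, Fin.mk_zero, Fin.mk_one]
      simp [rot]
      nlinarith [hpyth]
  · have hij : i ≠ j := fun hc => by rw [hc] at h; exact h rfl
    rw [Matrix.one_apply_ne hij]
    apply Finset.sum_eq_zero
    intro k _
    by_cases hk : (k:ℕ)/2 = (i:ℕ)/2
    · have hk2 : (k:ℕ)/2 ≠ (j:ℕ)/2 := by omega
      simp only [blockRotG]
      rw [if_neg hk2, mul_zero]
    · simp only [blockRotG]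
      rw [if_neg hk, zero_mul]

lemma inner_eq_dot {k : ℕ} (x y : EuclideanSpace ℝ (Fin k)) :
    ⟪x, y⟫ = dotProduct (x : Fin k → ℝ) (y : Fin k → ℝ) := by
  simp [PiLp.inner_apply, RCLike.inner_apply, dotProduct, mul_comm]

lemma inner_apM_blockRotG (p : ℕ) (θ : Fin p → ℝ) (x y : EuclideanSpace ℝ (Fin (2 * p))) :
    ⟪apM (blockRotG p θ) x, apM (blockRotG p θ) y⟫ = ⟪x, y⟫ := by
  rw [inner_eq_dot, inner_eq_dot, apM, apM, WithLp.ofLp_toLp, WithLp.ofLp_toLp, Matrix.dotProduct_mulVec]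
  have h1 : Matrix.vecMul (Matrix.mulVec (blockRotG p θ) x) (blockRotG p θ)
      = Matrix.mulVec ((blockRotG p θ)ᵀ * blockRotG p θ) x := by
    rw [← Matrix.transpose_transpose (blockRotG p θ), Matrix.vecMul_transpose,
      Matrix.mulVec_mulVec, Matrix.transpose_transpose]
  rw [h1, blockRotG_orth, Matrix.one_mulVec]

lemma hasDerivAt_apM {k : ℕ} (F : ℝ → Matrix (Fin k) (Fin k) ℝ) (F' : Matrix (Fin k) (Fin k) ℝ)
    (t : ℝ) (h : ∀ i j, HasDerivAt (fun s => F s i j) (F' i j) t)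
    (x : EuclideanSpace ℝ (Fin k)) :
    HasDerivAt (fun s => apM (F s) x) (apM F' x) t := by
  have hpi : HasDerivAt (fun s => (fun i => ∑ j, F s i j * x j : Fin k → ℝ))
      (fun i => ∑ j, F' i j * x j) t :=
    hasDerivAt_pi.2 fun i => HasDerivAt.fun_sum fun j _ => (h i j).mul_const (x j)
  have he := ((PiLp.continuousLinearEquiv 2 ℝ (fun _ : Fin k => ℝ)).symm
    : (Fin k → ℝ) →L[ℝ] EuclideanSpace ℝ (Fin k)).hasFDerivAt.comp_hasDerivAt t hpi
  exact he

/-- entrywise derivative of `blockRot` -/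
noncomputable def blockRotD (p : ℕ) (A : Fin p → ℝ) (t : ℝ) :
    Matrix (Fin (2 * p)) (Fin (2 * p)) ℝ := fun i j =>
  if (i : ℕ) / 2 = (j : ℕ) / 2 then
    A ⟨(i : ℕ) / 2, by have := i.isLt; omega⟩ *
      rot (A ⟨(i : ℕ) / 2, by have := i.isLt; omega⟩ * t + Real.pi / 2)
      ⟨(i : ℕ) % 2, by omega⟩ ⟨(j : ℕ) % 2, by omega⟩
  else 0

lemma blockRot_eq (p : ℕ) (A : Fin p → ℝ) (t : ℝ) :
    blockRot p A t = blockRotG p (fun l => A l * t) := rfl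

lemma hasDerivAt_blockRot_entry (p : ℕ) (A : Fin p → ℝ) (t : ℝ) (i j : Fin (2 * p)) :
    HasDerivAt (fun s => blockRot p A s i j) (blockRotD p A t i j) t := by
  by_cases h : (i : ℕ) / 2 = (j : ℕ) / 2
  · simp only [blockRot, blockRotD, if_pos h]
    have hil : (i : ℕ) / 2 < p := by have := i.isLt; omega
    set l : Fin p := ⟨(i : ℕ) / 2, hil⟩
    set a : Fin 2 := ⟨(i : ℕ) % 2, by omega⟩
    set b : Fin 2 := ⟨(j : ℕ) % 2, by omega⟩
    have h1 : HasDerivAt (fun s : ℝ => A l * s) (A l * 1) t := (hasDerivAt_id t).const_mul _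
    have h2 := (hasDerivAt_rot_entry a b (A l * t)).comp t h1
    refine h2.congr_deriv ?_
    ring
  · simp only [blockRot, blockRotD, if_neg h]
    exact hasDerivAt_const t 0

lemma hasDerivAt_blockRotD_entry (p : ℕ) (A : Fin p → ℝ) (t : ℝ) (i j : Fin (2 * p)) :
    HasDerivAt (fun s => blockRotD p A s i j)
      ((-(bigA p A ^ 2 * blockRot p A t)) i j) t := by
  have hent : (-(bigA p A ^ 2 * blockRot p A t)) i j
      = -(A ⟨(i : ℕ) / 2, by have := i.isLt; omega⟩ ^ 2 * blockRot p A t i j) := by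
    simp only [Matrix.neg_apply, sq, Matrix.mul_assoc, bigA, Matrix.diagonal_mul]
    ring
  rw [hent]
  by_cases h : (i : ℕ) / 2 = (j : ℕ) / 2
  · simp only [blockRot, blockRotD, if_pos h]
    have hil : (i : ℕ) / 2 < p := by have := i.isLt; omega
    set l : Fin p := ⟨(i : ℕ) / 2, hil⟩
    set a : Fin 2 := ⟨(i : ℕ) % 2, by omega⟩
    set b : Fin 2 := ⟨(j : ℕ) % 2, by omega⟩
    have h1 : HasDerivAt (fun s : ℝ => A l * s + Real.pi / 2) (A l * 1) t :=
      ((hasDerivAt_id t).const_mul _).add_const _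
    have h2 := ((hasDerivAt_rot_entry a b (A l * t + Real.pi / 2)).comp t h1).const_mul (A l)
    refine h2.congr_deriv ?_
    have h3 : A l * t + Real.pi / 2 + Real.pi / 2 = A l * t + Real.pi := by ring
    rw [h3, rot_add_pi]
    ring
  · simp only [blockRot, blockRotD, if_neg h]
    simpa using hasDerivAt_const t (0 : ℝ)

lemma bigA_sq_comm (p : ℕ) (A : Fin p → ℝ) (t : ℝ) :
    bigA p A ^ 2 * blockRot p A t = blockRot p A t * bigA p A ^ 2 := by
  have hsq : bigA p A ^ 2 =
      Matrix.diagonal (fun i : Fin (2*p) => A ⟨(i : ℕ) / 2, by have := i.isLt; omega⟩ ^ 2) := by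
    rw [sq, bigA, Matrix.diagonal_mul_diagonal]
    congr 1
    funext i
    ring
  rw [hsq]
  ext i j
  rw [Matrix.diagonal_mul, Matrix.mul_diagonal]
  by_cases h : (i : ℕ) / 2 = (j : ℕ) / 2
  · have : (⟨(i : ℕ) / 2, by have := i.isLt; omega⟩ : Fin p)
        = ⟨(j : ℕ) / 2, by have := j.isLt; omega⟩ := Fin.ext h
    rw [this]
    ring
  · simp only [blockRot, if_neg h]
    ring

noncomputable def apLM {k : ℕ} (M : Matrix (Fin k) (Fin k) ℝ) :
    EuclideanSpace ℝ (Fin k) →ₗ[ℝ] EuclideanSpace ℝ (Fin k) where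
  toFun := apM M
  map_add' x y := by
    ext i
    simp [apM, Matrix.mulVec, dotProduct, PiLp.add_apply, mul_add,
      Finset.sum_add_distrib]
  map_smul' c x := by
    ext i
    simp [apM, Matrix.mulVec, dotProduct, PiLp.smul_apply, Finset.mul_sum,
      smul_eq_mul]
    congr 1
    funext j
    ring

lemma apM_eq {k : ℕ} (M : Matrix (Fin k) (Fin k) ℝ) (x : EuclideanSpace ℝ (Fin k)) :
    apM M x = apLM M x := rfl

lemma apM_mulmul {k : ℕ} (M N : Matrix (Fin k) (Fin k) ℝ) (x : EuclideanSpace ℝ (Fin k)) :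
    apM (M * N) x = apM M (apM N x) := by
  simp [apM, ← Matrix.mulVec_mulVec]

lemma inner_apM_blockRot (p : ℕ) (A : Fin p → ℝ) (t : ℝ)
    (x y : EuclideanSpace ℝ (Fin (2 * p))) :
    ⟪apM (blockRot p A t) x, apM (blockRot p A t) y⟫ = ⟪x, y⟫ := by
  rw [blockRot_eq]
  exact inner_apM_blockRotG p _ x y

lemma blockRotD_eq (p : ℕ) (A : Fin p → ℝ) (t : ℝ) :
    blockRotD p A t = blockRotG p (fun l => A l * t + Real.pi / 2) * bigA p A := by
  ext i j
  rw [bigA, Matrix.mul_diagonal]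
  by_cases h : (i : ℕ) / 2 = (j : ℕ) / 2
  · simp only [blockRotD, blockRotG, if_pos h]
    have : (⟨(j : ℕ) / 2, by have := j.isLt; omega⟩ : Fin p)
        = ⟨(i : ℕ) / 2, by have := i.isLt; omega⟩ := Fin.ext h.symm
    rw [this]
    ring
  · simp only [blockRotD, blockRotG, if_neg h]
    ring

lemma inner_blockRotD_self (p : ℕ) (A : Fin p → ℝ) (t : ℝ)
    (x : EuclideanSpace ℝ (Fin (2 * p))) :
    ⟪apM (blockRotD p A t) x, apM (blockRotD p A t) x⟫ = ‖apM (bigA p A) x‖ ^ 2 := by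
  rw [blockRotD_eq, apM_mulmul, inner_apM_blockRotG, real_inner_self_eq_norm_sq]


/-- If the configuration `Q_1, ..., Q_n` on the sphere satisfies the algebraic
relative-equilibrium system, then `q_i(t) = T_k(At) Q_i` solves the curved `n`-body
equations. -/
theorem solution_of_relEq (p n : ℕ) (A : Fin p → ℝ) (m : Fin n → ℝ)
    (Q : Fin n → EuclideanSpace ℝ (Fin (2 * p)))
    (hm : ∀ j, 0 < m j) (hQ : ∀ i, ‖Q i‖ = 1)
    (hsep : ∀ i j, i ≠ j → ⟪Q i, Q j⟫ ^ 2 ≠ 1)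
    (heq : ∀ i : Fin n,
      -apM (bigA p A ^ 2) (Q i) =
        (∑ j ∈ Finset.univ.erase i,
          (m j / (1 - ⟪Q i, Q j⟫ ^ 2) ^ ((3 : ℝ) / 2)) • (Q j - ⟪Q i, Q j⟫ • Q i))
        - ‖apM (bigA p A) (Q i)‖ ^ 2 • Q i) :
    ∀ (i : Fin n) (t : ℝ),
      deriv (deriv (fun s => apM (blockRot p A s) (Q i))) t =
        (∑ j ∈ Finset.univ.erase i,
          (m j / (1 - ⟪apM (blockRot p A t) (Q i), apM (blockRot p A t) (Q j)⟫ ^ 2)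
              ^ ((3 : ℝ) / 2)) •
            (apM (blockRot p A t) (Q j) -
              ⟪apM (blockRot p A t) (Q i), apM (blockRot p A t) (Q j)⟫ •
                apM (blockRot p A t) (Q i)))
        - ⟪deriv (fun s => apM (blockRot p A s) (Q i)) t,
            deriv (fun s => apM (blockRot p A s) (Q i)) t⟫ • apM (blockRot p A t) (Q i) := by
  intro i t
  have hder : deriv (fun s => apM (blockRot p A s) (Q i))
      = fun u => apM (blockRotD p A u) (Q i) := by
    funext u
    exact (hasDerivAt_apM _ _ u (fun a b => hasDerivAt_blockRot_entry p A u a b) (Q i)).deriv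
  have hder2 : deriv (fun u => apM (blockRotD p A u) (Q i)) t
      = apM (-(bigA p A ^ 2 * blockRot p A t)) (Q i) :=
    (hasDerivAt_apM _ _ t (fun a b => hasDerivAt_blockRotD_entry p A t a b) (Q i)).deriv
  rw [hder, hder2]
  have hL : apM (-(bigA p A ^ 2 * blockRot p A t)) (Q i)
      = apM (blockRot p A t) (-apM (bigA p A ^ 2) (Q i)) := by
    rw [bigA_sq_comm]
    calc apM (-(blockRot p A t * bigA p A ^ 2)) (Q i)
        = -(apM (blockRot p A t * bigA p A ^ 2) (Q i)) := by
          simp [apM, Matrix.neg_mulVec]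
      _ = -(apM (blockRot p A t) (apM (bigA p A ^ 2) (Q i))) := by rw [apM_mulmul]
      _ = apM (blockRot p A t) (-apM (bigA p A ^ 2) (Q i)) := by
          simp only [apM_eq]
          exact (map_neg _ _).symm
  rw [hL, heq i]
  simp only [apM_eq (blockRot p A t), map_sub, map_smul, map_sum]
  simp only [inner_apM_blockRot, inner_blockRotD_self, ← apM_eq]
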